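/- Let C be a triangulated category with a t-structure. Suppose there is a distinguished triangle X \to Y \to Y[k] for some k > 0, where X \in C^{\le 0} and Hom^i(Y, Y) = 0 for all sufficiently large i. Then Y \in C^{\le 0}. -/

import Mathlib

open CategoryTheory Limits Pretriangulated Triangulated

/-- Let `C` be a triangulated category with a t-structure. Suppose there is a
distinguished triangle `X ⟶ Y ⟶ Y⟦k⟧ ⟶ X⟦1⟧` for some `k > 0`, where `X ∈ C^{≤0}` and
`Hom^i(Y,Y) = Hom(Y, Y⟦i⟧) = 0` for all sufficiently large `i`. Then `Y ∈ C^{≤0}`. -/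
theorem mem_LE_zero_of_triangle_with_shift {C : Type*} [Category C] [Preadditive C]
    [HasZeroObject C] [HasShift C ℤ] [∀ n : ℤ, (shiftFunctor C n).Additive] [Pretriangulated C]
    (t : TStructure C) (k : ℤ) (hk : 0 < k) (X Y : C) (hX : t.le 0 X)
    (f : X ⟶ Y) (φ : Y ⟶ Y⟦k⟧) (h : Y⟦k⟧ ⟶ X⟦(1 : ℤ)⟧)
    (hT : Triangle.mk f φ h ∈ distTriang C)
    (hvanish : ∃ N : ℤ, ∀ i ≥ N, ∀ g : Y ⟶ Y⟦i⟧, g = 0) :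
    t.le 0 Y := by
  obtain ⟨N, hN⟩ := hvanish
  -- Step 1: every map from `Y` to an object of `C^{≥1}` vanishes.
  have key : ∀ (Z : C), t.ge 1 Z → ∀ g : Y ⟶ Z, g = 0 := by
    intro Z hZ g
    -- `g` factors through arbitrarily high shifts of `Y`.
    have fact : ∀ n : ℕ, ∃ (m : ℤ) (_ : (n : ℤ) ≤ m) (c : Y ⟶ Y⟦m⟧) (g' : Y⟦m⟧ ⟶ Z),
        g = c ≫ g' := by
      intro n
      induction n with
      | zero =>
        exact ⟨0, le_refl _, (shiftFunctorZero C ℤ).inv.app Y,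
          (shiftFunctorZero C ℤ).hom.app Y ≫ g, by simp⟩
      | succ n ih =>
        obtain ⟨m, hm, c, g', hg⟩ := ih
        have hm0 : (0 : ℤ) ≤ m := le_trans (by positivity) hm
        have hTm := Triangle.shift_distinguished _ hT m
        have hXm : t.le 0 (X⟦m⟧) :=
          t.le_monotone (show -m ≤ 0 by omega) _ (t.le_shift 0 m (-m) (by omega) X hX)
        have hzero : ((Triangle.shiftFunctor C m).obj (Triangle.mk f φ h)).mor₁ ≫ g' = 0 := by
          change (m.negOnePow • f⟦m⟧') ≫ g' = 0
          rw [Linear.units_smul_comp, t.zero' (f⟦m⟧' ≫ g') hXm hZ, smul_zero]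
        obtain ⟨g'', hg''⟩ := Triangle.yoneda_exact₂ _ hTm g' hzero
        refine ⟨m + k, by omega,
          c ≫ ((Triangle.shiftFunctor C m).obj (Triangle.mk f φ h)).mor₂ ≫
            (shiftFunctorAdd' C k m (m + k) (by omega)).inv.app Y,
          (shiftFunctorAdd' C k m (m + k) (by omega)).hom.app Y ≫ g'', ?_⟩
        rw [hg, hg'']
        have e : ∀ (u : Y⟦m⟧ ⟶ (Y⟦k⟧)⟦m⟧) (v : (Y⟦k⟧)⟦m⟧ ⟶ Z), c ≫ u ≫ v = (c ≫ u ≫ (shiftFunctorAdd' C k m (m + k) (by omega)).inv.app Y) ≫ (shiftFunctorAdd' C k m (m + k) (by omega)).hom.app Y ≫ v := by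
          intro u v; simp
        exact e _ _
    obtain ⟨n, hn⟩ : ∃ n : ℕ, N ≤ (n : ℤ) := ⟨N.toNat, Int.self_le_toNat N⟩
    obtain ⟨m, hm, c, g', hg⟩ := fact n
    rw [hg, hN m (le_trans hn hm) c, zero_comp]
  -- Step 2: use the truncation triangle for `Y`.
  obtain ⟨A, B, hA, hB, a, b, d, hTri⟩ := t.exists_triangle_zero_one Y
  have hb : b = 0 := key B hB b
  obtain ⟨p, hp⟩ := Triangle.yoneda_exact₃ _ hTri (𝟙 B)
    (by change b ≫ 𝟙 B = 0; rw [hb, Limits.zero_comp])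
  have hA1 : t.le 0 (A⟦(1 : ℤ)⟧) :=
    t.le_monotone (show (-1 : ℤ) ≤ 0 by omega) _ (t.le_shift 0 1 (-1) (by omega) A hA)
  have hp0 : p = 0 := t.zero' p hA1 hB
  have hBzero : IsZero B := by
    rw [IsZero.iff_id_eq_zero, hp, hp0, comp_zero]; rfl
  have : IsIso a := (Triangle.isZero₃_iff_isIso₁ _ hTri).1 hBzero
  exact (t.le 0).prop_of_iso (asIso a) hA
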